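/- Every isometry A ∈ Isom(L_z) with A(Fix κ₁) = Fix(κ₁) satisfies A(u₁) = ε₁·u₁ and A(u₂) = ε₂·u₂ for some signs ε₁, ε₂ ∈ {1, −1}; conversely, for each of the four sign choices (ε₁, ε₂) ∈ {1, −1}² there exists A ∈ Isom(L_z) with A(Fix κ₁) = Fix(κ₁), A(u₁) = ε₁·u₁, and A(u₂) = ε₂·u₂. Hence the setwise stabilizer of Fix(κ₁) in Isom(L_z) acts on Fix(κ₁) through a group isomorphic to ℤ/2 × ℤ/2. -/

import Mathlib

/-- The imaginary unit `i` in the Gaussian integers `ℤ[i]`. -/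
def gi : GaussianInt := Zsqrtd.sqrtd

/-- The underlying `ℤ[i]`-module of the Gaussian lattice `L_z`. -/
abbrev Lz : Type := GaussianInt × GaussianInt

/-- The Hermitian form of `L_z`, given by the matrix `[[-2, 1-i], [1+i, -2]]`;
conjugate-linear in the first argument, linear in the second. -/
def hz (x y : Lz) : GaussianInt :=
  star x.1 * (-2) * y.1 + star x.1 * (1 - gi) * y.2 +
    star x.2 * (1 + gi) * y.1 + star x.2 * (-2) * y.2

/-- An isometry of `L_z`: a `ℤ[i]`-linear bijection preserving the form `hz`. -/
def IsIsomLz (A : Lz → Lz) : Prop :=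
  Function.Bijective A ∧ (∀ x y : Lz, A (x + y) = A x + A y) ∧
    (∀ (c : GaussianInt) (x : Lz), A (c • x) = c • A x) ∧
    ∀ x y : Lz, hz (A x) (A y) = hz x y

/-- An involutive anti-isometry of `L_z`: an additive bijection `ν` with
`ν (c • v) = c̄ • ν v`, `hz (ν x) (ν y) = conj (hz x y)` and `ν ∘ ν = id`. -/
def IsInvAntiIsomLz (ν : Lz → Lz) : Prop :=
  Function.Bijective ν ∧ (∀ x y : Lz, ν (x + y) = ν x + ν y) ∧
    (∀ (c : GaussianInt) (x : Lz), ν (c • x) = star c • ν x) ∧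
    (∀ x y : Lz, hz (ν x) (ν y) = star (hz x y)) ∧
    ∀ x : Lz, ν (ν x) = x

/-- The anti-isometry `κ₁ : (x₁, x₂) ↦ (−x̄₂, −x̄₁)` of `L_z`. -/
def kappa1 (x : Lz) : Lz := (-(star x.2), -(star x.1))

/-- The anti-isometry `κ₃ : (x₁, x₂) ↦ (i·x̄₁, −x̄₂)` of `L_z`. -/
def kappa3 (x : Lz) : Lz := (gi * star x.1, -(star x.2))

/-! ### Auxiliary lemmas -/

lemma star_re' (z : GaussianInt) : (star z).re = z.re := rfl
lemma star_im' (z : GaussianInt) : (star z).im = -z.im := rfl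
lemma star_gi : star gi = -gi := rfl

/-- The isometry `B = [[-i, 1+i],[1-i, i]]` acting as `-1` on `u₁` and `+1` on `u₂`. -/
def Bmap (x : Lz) : Lz := (-gi * x.1 + (1 + gi) * x.2, (1 - gi) * x.1 + gi * x.2)

lemma Bmap_invol (x : Lz) : Bmap (Bmap x) = x := by
  obtain ⟨x1, x2⟩ := x
  simp only [Bmap, Prod.mk.injEq]
  constructor <;> ring

lemma Bmap_add (x y : Lz) : Bmap (x + y) = Bmap x + Bmap y := by
  obtain ⟨x1, x2⟩ := x; obtain ⟨y1, y2⟩ := y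
  simp only [Bmap, Prod.mk_add_mk, Prod.mk.injEq]
  constructor <;> ring

lemma Bmap_smul (c : GaussianInt) (x : Lz) : Bmap (c • x) = c • Bmap x := by
  obtain ⟨x1, x2⟩ := x
  simp only [Bmap, Prod.smul_mk, smul_eq_mul, Prod.mk.injEq]
  constructor <;> ring

lemma Bmap_form (x y : Lz) : hz (Bmap x) (Bmap y) = hz x y := by
  obtain ⟨x1, x2⟩ := x; obtain ⟨y1, y2⟩ := y
  simp only [hz, Bmap, star_add, star_mul', star_neg, star_one, star_sub, star_gi]
  ring

lemma Bmap_kappa (x : Lz) : kappa1 (Bmap x) = Bmap (kappa1 x) := by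
  obtain ⟨x1, x2⟩ := x
  simp only [kappa1, Bmap, star_add, star_mul', star_neg, star_one, star_sub, star_gi,
    Prod.mk.injEq]
  constructor <;> ring

lemma Bmap_neg (x : Lz) : Bmap (-x) = -Bmap x := by
  obtain ⟨x1, x2⟩ := x
  simp only [Bmap, Prod.neg_mk, Prod.mk.injEq]
  constructor <;> ring

lemma kappa1_neg (x : Lz) : kappa1 (-x) = -kappa1 x := by
  obtain ⟨x1, x2⟩ := x
  simp [kappa1]

lemma hz_neg_neg (x y : Lz) : hz (-x) (-y) = hz x y := by
  obtain ⟨x1, x2⟩ := x; obtain ⟨y1, y2⟩ := y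
  simp only [hz, Prod.neg_mk, star_neg]
  ring

lemma isom_of_invol {A : Lz → Lz} (hinv : ∀ x, A (A x) = x)
    (hadd : ∀ x y, A (x + y) = A x + A y) (hsmul : ∀ (c : GaussianInt) x, A (c • x) = c • A x)
    (hform : ∀ x y, hz (A x) (A y) = hz x y) : IsIsomLz A :=
  ⟨Function.Involutive.bijective hinv, hadd, hsmul, hform⟩

lemma image_fix_eq {A : Lz → Lz} (hcom : ∀ x, kappa1 (A x) = A (kappa1 x))
    (hinv : ∀ x, A (A x) = x) :
    A '' {v : Lz | kappa1 v = v} = {v : Lz | kappa1 v = v} := by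
  ext v
  constructor
  · rintro ⟨w, hw, rfl⟩
    simp only [Set.mem_setOf_eq] at *
    rw [hcom, hw]
  · intro hv
    refine ⟨A v, ?_, hinv v⟩
    simp only [Set.mem_setOf_eq] at *
    rw [hcom, hv]

lemma int_solve1 (p q : ℤ) (h : 3*p^2 + q^2 - 2*p*q = 2) :
    (p = -1 ∧ q = -1) ∨ (p = 1 ∧ q = 1) := by
  have h1 : -1 ≤ p := by nlinarith [sq_nonneg (p - q)]
  have h2 : p ≤ 1 := by nlinarith [sq_nonneg (p - q)]
  interval_cases p
  · left; refine ⟨rfl, ?_⟩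
    have h3 : (q + 1)^2 = 0 := by linear_combination h
    have h4 := pow_eq_zero_iff (n := 2) (by norm_num) |>.mp h3
    omega
  · exfalso
    have h5 : q*q = 2 := by nlinarith
    have h6 : q ≤ -2 ∨ (-1 ≤ q ∧ q ≤ 1) ∨ 2 ≤ q := by omega
    rcases h6 with h6 | ⟨h6, h7⟩ | h6 <;> nlinarith
  · right; refine ⟨rfl, ?_⟩
    have h3 : (q - 1)^2 = 0 := by linear_combination h
    have h4 := pow_eq_zero_iff (n := 2) (by norm_num) |>.mp h3
    omega

lemma int_solve2 (p q : ℤ) (h : 3*p^2 + q^2 - 2*p*q = 1) :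
    (p = 0 ∧ q = -1) ∨ (p = 0 ∧ q = 1) := by
  have h1 : -1 ≤ p := by nlinarith [sq_nonneg (p - q)]
  have h2 : p ≤ 1 := by nlinarith [sq_nonneg (p - q)]
  interval_cases p
  · exfalso
    have h5 : q*q = -2*q - 2 := by nlinarith
    nlinarith [sq_nonneg (q + 1)]
  · have h5 : (q - 1) * (q + 1) = 0 := by linear_combination h
    rcases mul_eq_zero.mp h5 with h' | h'
    · right; exact ⟨rfl, by omega⟩
    · left; exact ⟨rfl, by omega⟩
  · exfalso
    have h5 : q*q = 2*q - 2 := by nlinarith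
    nlinarith [sq_nonneg (q - 1)]

lemma solveA (a : GaussianInt) (h : hz (a, -star a) (a, -star a) = -4) :
    a = -1 - gi ∨ a = 1 + gi := by
  have h' : 3*a.re^2 + a.im^2 - 2*a.re*a.im = 2 := by
    have hc := congrArg Zsqrtd.re h
    simp [hz, gi, sub_eq_add_neg, Zsqrtd.re_mul, Zsqrtd.im_mul, Zsqrtd.re_add, Zsqrtd.im_add,
      Zsqrtd.re_neg, Zsqrtd.im_neg, star_re', star_im'] at hc
    ring_nf at hc ⊢
    omega
  rcases int_solve1 _ _ h' with ⟨hp, hq⟩ | ⟨hp, hq⟩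
  · left
    rw [Zsqrtd.ext_iff]
    exact ⟨by rw [hp]; decide, by rw [hq]; decide⟩
  · right
    rw [Zsqrtd.ext_iff]
    exact ⟨by rw [hp]; decide, by rw [hq]; decide⟩

lemma solveB (a : GaussianInt) (h : hz (a, -star a) (a, -star a) = -2) :
    a = -gi ∨ a = gi := by
  have h' : 3*a.re^2 + a.im^2 - 2*a.re*a.im = 1 := by
    have hc := congrArg Zsqrtd.re h
    simp [hz, gi, sub_eq_add_neg, Zsqrtd.re_mul, Zsqrtd.im_mul, Zsqrtd.re_add, Zsqrtd.im_add,
      Zsqrtd.re_neg, Zsqrtd.im_neg, star_re', star_im'] at hc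
    ring_nf at hc ⊢
    omega
  rcases int_solve2 _ _ h' with ⟨hp, hq⟩ | ⟨hp, hq⟩
  · left
    rw [Zsqrtd.ext_iff]
    exact ⟨by rw [hp]; decide, by rw [hq]; decide⟩
  · right
    rw [Zsqrtd.ext_iff]
    exact ⟨by rw [hp]; decide, by rw [hq]; decide⟩

/-- Every isometry `A ∈ Isom(L_z)` stabilizing `Fix(κ₁)` setwise
satisfies `A u₁ = ε₁ • u₁` and `A u₂ = ε₂ • u₂` with signs `ε₁, ε₂ ∈ {1, −1}`;
conversely every choice of signs is realized by such an isometry.  Hence the setwise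
stabilizer of `Fix(κ₁)` in `Isom(L_z)` acts on `Fix(κ₁)` through `ℤ/2 × ℤ/2`. -/
theorem stmt11 :
    letI u₁ : Lz := (-1 - gi, 1 - gi)
    letI u₂ : Lz := (gi, gi)
    (∀ A : Lz → Lz, IsIsomLz A → A '' {v : Lz | kappa1 v = v} = {v : Lz | kappa1 v = v} →
      ∃ ε₁ ∈ ({1, -1} : Set GaussianInt), ∃ ε₂ ∈ ({1, -1} : Set GaussianInt),
        A u₁ = ε₁ • u₁ ∧ A u₂ = ε₂ • u₂) ∧
    (∀ ε₁ ∈ ({1, -1} : Set GaussianInt), ∀ ε₂ ∈ ({1, -1} : Set GaussianInt),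
      ∃ A : Lz → Lz, IsIsomLz A ∧
        A '' {v : Lz | kappa1 v = v} = {v : Lz | kappa1 v = v} ∧
        A u₁ = ε₁ • u₁ ∧ A u₂ = ε₂ • u₂) := by
  have m1 : (1 : GaussianInt) ∈ ({1, -1} : Set GaussianInt) := Set.mem_insert _ _
  have m2 : (-1 : GaussianInt) ∈ ({1, -1} : Set GaussianInt) :=
    Set.mem_insert_iff.mpr (Or.inr rfl)
  constructor
  · intro A hA himg
    obtain ⟨hbij, hadd, hsmul, hform⟩ := hA
    -- ((-1 - gi, 1 - gi) : Lz)
    have hu1 : A ((-1 - gi, 1 - gi) : Lz) ∈ {v : Lz | kappa1 v = v} := by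
      rw [← himg]
      exact Set.mem_image_of_mem A (show kappa1 ((-1 - gi, 1 - gi) : Lz) = ((-1 - gi, 1 - gi) : Lz) by decide)
    have h1 : kappa1 (A ((-1 - gi, 1 - gi) : Lz)) = A ((-1 - gi, 1 - gi) : Lz) := hu1
    have h2 : A ((-1 - gi, 1 - gi) : Lz) = ((A ((-1 - gi, 1 - gi) : Lz)).1, -star (A ((-1 - gi, 1 - gi) : Lz)).1) :=
      Prod.ext_iff.mpr ⟨rfl, (congrArg Prod.snd h1).symm⟩
    have hq1 : hz (A ((-1 - gi, 1 - gi) : Lz)) (A ((-1 - gi, 1 - gi) : Lz)) = -4 := by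
      rw [hform]; decide
    rw [h2] at hq1
    -- ((gi, gi) : Lz)
    have hu2 : A ((gi, gi) : Lz) ∈ {v : Lz | kappa1 v = v} := by
      rw [← himg]
      exact Set.mem_image_of_mem A (show kappa1 ((gi, gi) : Lz) = ((gi, gi) : Lz) by decide)
    have h1' : kappa1 (A ((gi, gi) : Lz)) = A ((gi, gi) : Lz) := hu2
    have h2' : A ((gi, gi) : Lz) = ((A ((gi, gi) : Lz)).1, -star (A ((gi, gi) : Lz)).1) :=
      Prod.ext_iff.mpr ⟨rfl, (congrArg Prod.snd h1').symm⟩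
    have hq2 : hz (A ((gi, gi) : Lz)) (A ((gi, gi) : Lz)) = -2 := by
      rw [hform]; decide
    rw [h2'] at hq2
    have H1 : ∃ ε₁ ∈ ({1, -1} : Set GaussianInt), A ((-1 - gi, 1 - gi) : Lz) = ε₁ • ((-1 - gi, 1 - gi) : Lz) := by
      rcases solveA _ hq1 with ha | ha
      · exact ⟨1, m1, by rw [h2, ha]; decide⟩
      · exact ⟨-1, m2, by rw [h2, ha]; decide⟩
    have H2 : ∃ ε₂ ∈ ({1, -1} : Set GaussianInt), A ((gi, gi) : Lz) = ε₂ • ((gi, gi) : Lz) := by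
      rcases solveB _ hq2 with ha | ha
      · exact ⟨-1, m2, by rw [h2', ha]; decide⟩
      · exact ⟨1, m1, by rw [h2', ha]; decide⟩
    obtain ⟨e1, me1, he1⟩ := H1
    obtain ⟨e2, me2, he2⟩ := H2
    exact ⟨e1, me1, e2, me2, he1, he2⟩
  · intro ε₁ hε₁ ε₂ hε₂
    simp only [Set.mem_insert_iff, Set.mem_singleton_iff] at hε₁ hε₂
    have negB_invol : ∀ x : Lz, -Bmap (-Bmap x) = x := by
      intro x; rw [Bmap_neg, neg_neg, Bmap_invol]
    have negid_invol : ∀ x : Lz, (fun y : Lz => -y) ((fun y : Lz => -y) x) = x := by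
      intro x; simp
    rcases hε₁ with rfl | rfl <;> rcases hε₂ with rfl | rfl
    · -- (1, 1) : identity
      refine ⟨id, ⟨Function.bijective_id, fun _ _ => rfl, fun _ _ => rfl, fun _ _ => rfl⟩,
        Set.image_id _, by decide, by decide⟩
    · -- (1, -1) : -B
      refine ⟨fun x => -Bmap x, isom_of_invol negB_invol
        (fun x y => by rw [Bmap_add, neg_add])
        (fun c x => by simp [Bmap_smul])
        (fun x y => by simp only [hz_neg_neg, Bmap_form]), ?_, by decide, by decide⟩
      exact image_fix_eq (fun x => by rw [kappa1_neg, Bmap_kappa]) negB_invol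
    · -- (-1, 1) : B
      refine ⟨Bmap, isom_of_invol Bmap_invol Bmap_add Bmap_smul Bmap_form, ?_,
        by decide, by decide⟩
      exact image_fix_eq Bmap_kappa Bmap_invol
    · -- (-1, -1) : -id
      refine ⟨fun x => -x, isom_of_invol (fun x => neg_neg x)
        (fun x y => by ring) (fun c x => by simp)
        (fun x y => hz_neg_neg x y), ?_, by decide, by decide⟩
      exact image_fix_eq (fun x => kappa1_neg x) (fun x => neg_neg x)
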